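/- Let G be an FC-group, i.e., a group in which every conjugacy class is finite. Then every left syndetic subset of G is right syndetic, and conversely. -/
import Mathlib

/-- `S` is left syndetic: `G = ⋃_{h ∈ H} Sh⁻¹` for some finite `H`. -/
def leftSyndetic {G : Type*} [Group G] (S : Set G) : Prop :=
  ∃ H : Finset G, ∀ g : G, ∃ h ∈ H, g * h ∈ S

/-- `S` is right syndetic: `G = ⋃_{h ∈ H} h⁻¹S` for some finite `H`. -/
def rightSyndetic {G : Type*} [Group G] (S : Set G) : Prop :=
  ∃ H : Finset G, ∀ g : G, ∃ h ∈ H, h * g ∈ S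

/-- In an FC-group (all conjugacy classes finite), a set is left syndetic iff it is
right syndetic. -/
theorem stmt13 {G : Type*} [Group G]
    (hFC : ∀ g : G, (Set.range fun x : G => x * g * x⁻¹).Finite) (S : Set G) :
    leftSyndetic S ↔ rightSyndetic S := by
  classical
  constructor
  · rintro ⟨H, hH⟩
    refine ⟨H.biUnion fun h => (hFC h).toFinset, fun g => ?_⟩
    obtain ⟨h, hh, hgh⟩ := hH g
    refine ⟨g * h * g⁻¹, Finset.mem_biUnion.2 ⟨h, hh, (hFC h).mem_toFinset.2 ⟨g, rfl⟩⟩, ?_⟩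
    simpa [mul_assoc] using hgh
  · rintro ⟨H, hH⟩
    refine ⟨H.biUnion fun h => (hFC h).toFinset, fun g => ?_⟩
    obtain ⟨h, hh, hgh⟩ := hH g
    refine ⟨g⁻¹ * h * g, Finset.mem_biUnion.2 ⟨h, hh, (hFC h).mem_toFinset.2 ⟨g⁻¹, by show g⁻¹ * h * g⁻¹⁻¹ = g⁻¹ * h * g; rw [inv_inv]⟩⟩, ?_⟩
    simpa [mul_assoc] using hgh
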